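/- Let m ≥ 2 be an integer and ω = exp(2π√−1/m) ∈ ℂ the primitive m-th root of unity. Then ∑_{i=1}^{m−1} ω^i/(1 − ω^i)² = −(m² − 1)/12. -/

import Mathlib

open Complex Finset


lemma sum_cast_id' (n : ℕ) : ∑ k ∈ Finset.range n, (k:ℂ) = n*(n-1)/2 := by
  induction n with
  | zero => simp
  | succ n ih => rw [Finset.sum_range_succ, ih]; push_cast; ring

lemma sum_cast_sq' (n : ℕ) : ∑ k ∈ Finset.range n, (k:ℂ)^2 = n*(n-1)*(2*n-1)/6 := by
  induction n with
  | zero => simp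
  | succ n ih => rw [Finset.sum_range_succ, ih]; push_cast; ring

lemma key_id' (n : ℕ) (z : ℂ) :
    (1 - z) * ∑ k ∈ Finset.range n, (k:ℂ) * z^k
      = (∑ k ∈ Finset.range n, z^k) - 1 - ((n:ℂ)-1) * z^n := by
  induction n with
  | zero => simp
  | succ n ih =>
    rw [Finset.sum_range_succ, Finset.sum_range_succ (f := fun k => z^k), mul_add, ih]
    push_cast; ring

lemma geom_zero' (m : ℕ) (z : ℂ) (hz : z^m = 1) (h1 : z ≠ 1) :
    ∑ k ∈ Finset.range m, z^k = 0 := by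
  rw [geom_sum_eq h1, hz]; simp

lemma lem1' (m : ℕ) (z : ℂ) (hz : z^m = 1) (h1 : z ≠ 1) :
    (1 - z) * ∑ k ∈ Finset.range m, (k:ℂ) * z^k = -(m:ℂ) := by
  rw [key_id', geom_zero' m z hz h1, hz]; ring

lemma term_eq' (m : ℕ) (hm : 1 ≤ m) (z : ℂ) (hz : z^m = 1) (h1 : z ≠ 1) :
    z/(1-z)^2 = z * (∑ k ∈ Finset.range m, (k:ℂ) * z^k)^2 / (m:ℂ)^2 := by
  have h2 : (1:ℂ) - z ≠ 0 := sub_ne_zero.2 (Ne.symm h1)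
  have hM : (m:ℂ) ≠ 0 := Nat.cast_ne_zero.2 (by omega)
  have h := lem1' m z hz h1
  set S := ∑ k ∈ Finset.range m, (k:ℂ) * z^k with hS
  have hsq : (1 - z)^2 * S^2 = (m:ℂ)^2 := by
    linear_combination ((1-z)*S - (m:ℂ)) * h
  rw [div_eq_div_iff (pow_ne_zero 2 h2) (pow_ne_zero 2 hM)]
  linear_combination (-z) * hsq

lemma geomIcc' (m : ℕ) (hm : 1 ≤ m) (ζ : ℂ) (hz : ζ^m = 1) :
    ∑ i ∈ Finset.Icc 1 (m-1), ζ^i = if ζ = 1 then ((m:ℂ)-1) else -1 := by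
  have hIcc : Finset.Icc 1 (m-1) = Finset.Ico 1 m := by
    rw [← Finset.Ico_add_one_right_eq_Icc]; congr 1; omega
  have h0 : ∑ i ∈ Finset.range m, ζ^i = 1 + ∑ i ∈ Finset.Icc 1 (m-1), ζ^i := by
    rw [hIcc, Finset.range_eq_Ico, Finset.sum_eq_sum_Ico_succ_bot (by omega)]
    simp
  by_cases h1 : ζ = 1
  · subst h1
    rw [if_pos rfl]
    simp only [one_pow, Finset.sum_const, nsmul_eq_mul, mul_one, Nat.card_Icc]
    have h3 : m - 1 + 1 - 1 = m - 1 := by omega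
    rw [h3, Nat.cast_sub hm, Nat.cast_one]
  · rw [if_neg h1]
    have := geom_zero' m ζ hz h1
    rw [this] at h0
    linear_combination -h0

lemma dvd_iff' (m k l : ℕ) (hm : 1 ≤ m) (hk : k < m) (hl : l < m) :
    m ∣ (k + l + 1) ↔ l = m - 1 - k := by
  constructor
  · rintro ⟨c, hc⟩
    rcases c with _ | _ | c
    · omega
    · omega
    · exfalso
      have h2 : 2 * m ≤ m * (c + 1 + 1) := by nlinarith
      omega
  · intro h; exact ⟨1, by omega⟩

lemma final_arith (m : ℕ) (hM : (m:ℂ) ≠ 0) :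
    (((m:ℂ)-1)*(m:ℂ)/(m:ℂ)^2 - ((m:ℂ)*((m:ℂ)-1)/2)/(m:ℂ)^2) * ((m:ℂ)*((m:ℂ)-1)/2)
      + (-(m:ℂ)/(m:ℂ)^2) * ((m:ℂ)*((m:ℂ)-1)*(2*(m:ℂ)-1)/6) = -(((m:ℂ)^2-1)/12) := by
  have h2 : (m:ℂ)^2 ≠ 0 := pow_ne_zero _ hM
  have e1 : (m:ℂ)^6 * ((m:ℂ))⁻¹^6 = 1 := by
    rw [← mul_pow, mul_inv_cancel₀ hM, one_pow]
  have e2 : (m:ℂ)^8 * ((m:ℂ))⁻¹^6 = (m:ℂ)^2 := by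
    calc (m:ℂ)^8 * ((m:ℂ))⁻¹^6 = (m:ℂ)^2 * ((m:ℂ)^6 * ((m:ℂ))⁻¹^6) := by ring
    _ = (m:ℂ)^2 := by rw [e1, mul_one]
  field_simp
  ring

/-- For an integer `m ≥ 2` and `ω = exp(2π√−1/m)` the primitive `m`-th root of unity,
`∑_{i=1}^{m−1} ω^i/(1 − ω^i)² = −(m² − 1)/12`. -/
theorem sum_root_div_one_sub_root_sq (m : ℕ) (hm : 2 ≤ m)
    (ω : ℂ) (hω : ω = Complex.exp (2 * Real.pi * Complex.I / m)) :
    ∑ i ∈ Finset.Icc 1 (m - 1), ω ^ i / (1 - ω ^ i) ^ 2 = -(((m : ℂ) ^ 2 - 1) / 12) := by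
  have hM : (m:ℂ) ≠ 0 := Nat.cast_ne_zero.2 (by omega)
  have hprim : IsPrimitiveRoot ω m := by
    rw [hω]; exact Complex.isPrimitiveRoot_exp m (by omega)
  have hωm : ω ^ m = 1 := hprim.pow_eq_one
  -- Step 1: rewrite each term
  have h1 : ∀ i ∈ Finset.Icc 1 (m-1), ω^i/(1-ω^i)^2
      = ∑ k ∈ Finset.range m, ∑ l ∈ Finset.range m,
          (k:ℂ)*(l:ℂ)*(ω^(k+l+1))^i / (m:ℂ)^2 := by
    intro i hi
    simp only [Finset.mem_Icc] at hi
    have hzm : (ω^i)^m = 1 := by rw [← pow_mul, mul_comm, pow_mul, hωm, one_pow]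
    have hz1 : ω^i ≠ 1 := hprim.pow_ne_one_of_pos_of_lt (by omega) (by omega)
    rw [term_eq' m (by omega) _ hzm hz1, sq, Finset.sum_mul_sum, Finset.mul_sum,
      Finset.sum_div]
    refine Finset.sum_congr rfl fun k _ => ?_
    rw [Finset.mul_sum, Finset.sum_div]
    refine Finset.sum_congr rfl fun l _ => ?_
    congr 1
    have e : (ω^(k+l+1))^i = ω^i * ((ω^i)^k * (ω^i)^l) := by
      rw [← pow_mul, ← pow_mul, ← pow_mul, ← pow_add, ← pow_add]
      congr 1; ring
    rw [e]; ring
  rw [Finset.sum_congr rfl h1, Finset.sum_comm]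
  have hswap : ∀ k ∈ Finset.range m,
      ∑ i ∈ Finset.Icc 1 (m-1), ∑ l ∈ Finset.range m, (k:ℂ)*(l:ℂ)*(ω^(k+l+1))^i / (m:ℂ)^2
      = ∑ l ∈ Finset.range m, ∑ i ∈ Finset.Icc 1 (m-1), (k:ℂ)*(l:ℂ)*(ω^(k+l+1))^i / (m:ℂ)^2 :=
    fun k _ => Finset.sum_comm
  rw [Finset.sum_congr rfl hswap]
  -- Step 2: inner geometric sums
  have h2 : ∀ k ∈ Finset.range m, ∀ l ∈ Finset.range m,
      ∑ i ∈ Finset.Icc 1 (m-1), (k:ℂ)*(l:ℂ)*(ω^(k+l+1))^i / (m:ℂ)^2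
      = (k:ℂ)*(l:ℂ)/(m:ℂ)^2 * (if l = m-1-k then (m:ℂ)-1 else -1) := by
    intro k hk l hl
    simp only [Finset.mem_range] at hk hl
    have hz : (ω^(k+l+1))^m = 1 := by rw [← pow_mul, mul_comm, pow_mul, hωm, one_pow]
    have : ∑ i ∈ Finset.Icc 1 (m-1), (k:ℂ)*(l:ℂ)*(ω^(k+l+1))^i / (m:ℂ)^2
        = (k:ℂ)*(l:ℂ)/(m:ℂ)^2 * ∑ i ∈ Finset.Icc 1 (m-1), (ω^(k+l+1))^i := by
      rw [Finset.mul_sum]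
      exact Finset.sum_congr rfl fun i _ => by ring
    rw [this, geomIcc' m (by omega) _ hz]
    congr 2
    rw [hprim.pow_eq_one_iff_dvd, dvd_iff' m k l (by omega) hk hl]
  rw [Finset.sum_congr rfl (fun k hk => Finset.sum_congr rfl (h2 k hk))]
  -- Step 3: evaluate inner l-sum
  have h3 : ∀ k ∈ Finset.range m,
      ∑ l ∈ Finset.range m, (k:ℂ)*(l:ℂ)/(m:ℂ)^2 * (if l = m-1-k then (m:ℂ)-1 else -1)
      = (((m:ℂ)-1)*(m:ℂ)/(m:ℂ)^2 - ((m:ℂ)*((m:ℂ)-1)/2)/(m:ℂ)^2) * (k:ℂ)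
        + (-(m:ℂ)/(m:ℂ)^2) * (k:ℂ)^2 := by
    intro k hk
    simp only [Finset.mem_range] at hk
    have hsplit : ∀ l : ℕ, (k:ℂ)*(l:ℂ)/(m:ℂ)^2 * (if l = m-1-k then (m:ℂ)-1 else -1)
        = (if l = m-1-k then (k:ℂ)*(l:ℂ)*(m:ℂ)/(m:ℂ)^2 else 0) - (k:ℂ)*(l:ℂ)/(m:ℂ)^2 := by
      intro l; split <;> ring
    rw [Finset.sum_congr rfl (fun l _ => hsplit l)]
    rw [Finset.sum_sub_distrib, Finset.sum_ite_eq' (Finset.range m) (m-1-k)]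
    rw [if_pos (Finset.mem_range.2 (by omega))]
    have hsum : ∑ l ∈ Finset.range m, (k:ℂ)*(l:ℂ)/(m:ℂ)^2
        = (k:ℂ)*((m:ℂ)*((m:ℂ)-1)/2)/(m:ℂ)^2 := by
      rw [← Finset.sum_div, ← Finset.mul_sum, sum_cast_id']
    rw [hsum]
    have hc : ((m-1-k:ℕ):ℂ) = (m:ℂ)-1-(k:ℂ) := by
      rw [Nat.cast_sub (by omega : k ≤ m-1), Nat.cast_sub (by omega : 1 ≤ m), Nat.cast_one]
    rw [hc]
    ring
  rw [Finset.sum_congr rfl h3, Finset.sum_add_distrib, ← Finset.mul_sum, ← Finset.mul_sum,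
    sum_cast_id', sum_cast_sq']
  exact final_arith m hM
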